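/- If λ and μ are distinct m-partitions of length n, then the representations V_λ and V_μ of H(m,1,n) are not isomorphic as H(m,1,n)-modules. -/

import Mathlib

/-- Generators of the cyclotomic Hecke algebra `H(m,1,n)`:
`tau` and `sig i` (representing `σ_{i+1}`) for `i : Fin (n-1)`. -/
inductive CycGen (n : ℕ) : Type
  | tau : CycGen n
  | sig : Fin (n - 1) → CycGen n

/-- The defining relations of the cyclotomic Hecke algebra `H(m,1,n)` with
parameters `q`, `qinv` (playing the role of `q⁻¹`) and `v : Fin m → R`. -/
inductive cycRel (R : Type) [CommRing R] (m n : ℕ) (q qinv : R) (v : Fin m → R) :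
    FreeAlgebra R (CycGen n) → FreeAlgebra R (CycGen n) → Prop
  | braid (i j : Fin (n - 1)) (h : (j : ℕ) = (i : ℕ) + 1) :
      cycRel R m n q qinv v
        (FreeAlgebra.ι R (CycGen.sig i) * FreeAlgebra.ι R (CycGen.sig j) *
          FreeAlgebra.ι R (CycGen.sig i))
        (FreeAlgebra.ι R (CycGen.sig j) * FreeAlgebra.ι R (CycGen.sig i) *
          FreeAlgebra.ι R (CycGen.sig j))
  | comm (i j : Fin (n - 1)) (h : (i : ℕ) + 1 < (j : ℕ)) :
      cycRel R m n q qinv v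
        (FreeAlgebra.ι R (CycGen.sig i) * FreeAlgebra.ι R (CycGen.sig j))
        (FreeAlgebra.ι R (CycGen.sig j) * FreeAlgebra.ι R (CycGen.sig i))
  | tauSigma (i : Fin (n - 1)) (h : (i : ℕ) = 0) :
      cycRel R m n q qinv v
        (FreeAlgebra.ι R CycGen.tau * FreeAlgebra.ι R (CycGen.sig i) *
          FreeAlgebra.ι R CycGen.tau * FreeAlgebra.ι R (CycGen.sig i))
        (FreeAlgebra.ι R (CycGen.sig i) * FreeAlgebra.ι R CycGen.tau *
          FreeAlgebra.ι R (CycGen.sig i) * FreeAlgebra.ι R CycGen.tau)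
  | tauComm (i : Fin (n - 1)) (h : 0 < (i : ℕ)) :
      cycRel R m n q qinv v
        (FreeAlgebra.ι R CycGen.tau * FreeAlgebra.ι R (CycGen.sig i))
        (FreeAlgebra.ι R (CycGen.sig i) * FreeAlgebra.ι R CycGen.tau)
  | quadratic (i : Fin (n - 1)) :
      cycRel R m n q qinv v
        (FreeAlgebra.ι R (CycGen.sig i) * FreeAlgebra.ι R (CycGen.sig i))
        ((q - qinv) • FreeAlgebra.ι R (CycGen.sig i) + 1)
  | cyclotomic :
      cycRel R m n q qinv v
        ((List.ofFn (fun k : Fin m =>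
            FreeAlgebra.ι R CycGen.tau - algebraMap R (FreeAlgebra R (CycGen n)) (v k))).prod)
        0

/-- The cyclotomic Hecke algebra `H(m,1,n)`. -/
abbrev CycHecke (R : Type) [CommRing R] (m n : ℕ) (q qinv : R) (v : Fin m → R) : Type :=
  RingQuot (cycRel R m n q qinv v)

variable (R : Type) [CommRing R] (m n : ℕ) (q qinv : R) (v : Fin m → R)

/-- The generator `τ` of `H(m,1,n)`. -/
noncomputable def tauH : CycHecke R m n q qinv v :=
  RingQuot.mkAlgHom R (cycRel R m n q qinv v) (FreeAlgebra.ι R CycGen.tau)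

/-- The generator `σ_{i+1}` of `H(m,1,n)`, for `i : Fin (n-1)`. -/
noncomputable def sigH (i : Fin (n - 1)) : CycHecke R m n q qinv v :=
  RingQuot.mkAlgHom R (cycRel R m n q qinv v) (FreeAlgebra.ι R (CycGen.sig i))

/-- The generator `σ_{k+1}` of `H(m,1,n)`, for `k : ℕ` (defined as `1` out of range). -/
noncomputable def sigN (k : ℕ) : CycHecke R m n q qinv v :=
  if h : k < n - 1 then sigH R m n q qinv v ⟨k, h⟩ else 1

/-- The inverse `σ_{k+1}⁻¹ = σ_{k+1} - (q - q⁻¹)` of the generator `σ_{k+1}`. -/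
noncomputable def sigInvN (k : ℕ) : CycHecke R m n q qinv v :=
  sigN R m n q qinv v k - algebraMap R (CycHecke R m n q qinv v) (q - qinv)

/-- `leftW j = σ_j⁻¹ σ_{j-1}⁻¹ ⋯ σ_1⁻¹` (with `leftW 0 = 1`). -/
noncomputable def leftW : ℕ → CycHecke R m n q qinv v
  | 0 => 1
  | j + 1 => sigInvN R m n q qinv v j * leftW j

/-- `rW k = σ_1 σ_2 ⋯ σ_k` (with `rW 0 = 1`). -/
noncomputable def rW : ℕ → CycHecke R m n q qinv v
  | 0 => 1
  | k + 1 => rW k * sigN R m n q qinv v k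

/-- The Jucys–Murphy elements: `JM k` is the element `J_{k+1}` of the paper, so
`JM 0 = τ` and `JM (k+1) = σ_{k+1} (JM k) σ_{k+1}`. -/
noncomputable def JM : ℕ → CycHecke R m n q qinv v
  | 0 => tauH R m n q qinv v
  | k + 1 => sigN R m n q qinv v k * JM k * sigN R m n q qinv v k
/-- The semisimplicity conditions (together with `q ≠ 0`, `v k ≠ 0`) on the
parameters: `1 + q² + ⋯ + q^{2N} ≠ 0` for `0 < N < n`, and `q^{2i} v_j ≠ v_k`
for `j ≠ k` and `-n < i < n`. -/
def SSParams (m n : ℕ) (q : ℂ) (v : Fin m → ℂ) : Prop :=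
  (∀ N : ℕ, 0 < N → N < n → ∑ k ∈ Finset.range (N + 1), q ^ (2 * k) ≠ 0) ∧
  (∀ j k : Fin m, j ≠ k → ∀ i : ℤ, -(n : ℤ) < i → i < (n : ℤ) → q ^ (2 * i) * v j ≠ v k)

/-- A subspace `W` is invariant under an endomorphism `f`. -/
def Invt {V : Type} [AddCommGroup V] [Module ℂ V] (f : Module.End ℂ V)
    (W : Submodule ℂ V) : Prop :=
  ∀ x ∈ W, f x ∈ W

/-- A `C`-representation of `H(m,1,n)`: the Jucys–Murphy elements `J_1,…,J_n`
act by diagonalizable operators, and for every `i = 1,…,n-1` the representation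
space is completely reducible over the subalgebra generated by `J_i, J_{i+1}, σ_i`
(every invariant subspace has an invariant complement). -/
def IsCRep (m n : ℕ) (q : ℂ) (v : Fin m → ℂ) {V : Type} [AddCommGroup V] [Module ℂ V]
    (ρ : CycHecke ℂ m n q q⁻¹ v →ₐ[ℂ] Module.End ℂ V) : Prop :=
  (∀ i < n, ⨆ μ : ℂ, (ρ (JM ℂ m n q q⁻¹ v i)).eigenspace μ = ⊤) ∧
  ∀ i : ℕ, i + 1 < n → ∀ W : Submodule ℂ V,
    Invt (ρ (JM ℂ m n q q⁻¹ v i)) W → Invt (ρ (JM ℂ m n q q⁻¹ v (i + 1))) W →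
    Invt (ρ (sigN ℂ m n q q⁻¹ v i)) W →
    ∃ W' : Submodule ℂ V, IsCompl W W' ∧ Invt (ρ (JM ℂ m n q q⁻¹ v i)) W' ∧
      Invt (ρ (JM ℂ m n q q⁻¹ v (i + 1))) W' ∧ Invt (ρ (sigN ℂ m n q q⁻¹ v i)) W'
/-- A standard Young `m`-tableau with `n` nodes, encoded as the map sending the
entry `i` (0-based: `i` stands for the number `i+1`) to its node `(k, r, s)`
(diagram `k`, row `r`, column `s`, all 0-based). The conditions: the filling is
injective, and for each node all nodes to its left in its row and all nodes
above it in its column are occupied by smaller entries. This holds if and only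
if the occupied nodes form an `m`-tuple of Young diagrams of total size `n` and
the entries increase along the rows and columns of every diagram. -/
def IsStdTab (m n : ℕ) (T : Fin n → Fin m × ℕ × ℕ) : Prop :=
  Function.Injective T ∧
  ∀ i : Fin n,
    (∀ s' < (T i).2.2, ∃ j : Fin n, j < i ∧ T j = ((T i).1, (T i).2.1, s')) ∧
    (∀ r' < (T i).2.1, ∃ j : Fin n, j < i ∧ T j = ((T i).1, r', (T i).2.2))

/-- The content `c(T|i) = v_k q^{2(s-r)}` of the node of `T` containing the
entry `i` (in row `r` and column `s` of the `k`-th diagram). -/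
noncomputable def tabContent (m n : ℕ) (q : ℂ) (v : Fin m → ℂ)
    (T : Fin n → Fin m × ℕ × ℕ) (i : Fin n) : ℂ :=
  v (T i).1 * q ^ (2 * (((T i).2.2 : ℤ) - ((T i).2.1 : ℤ)))
/-- The type of standard `m`-tableaux of shape `S` (where the shape is recorded
as the set `S` of occupied nodes). -/
def Tab (m n : ℕ) (S : Set (Fin m × ℕ × ℕ)) : Type :=
  {T : Fin n → Fin m × ℕ × ℕ // IsStdTab m n T ∧ Set.range T = S}

open Classical in
/-- A representation of `H(m,1,n)` on the vector space `V_λ` with basis the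
standard `m`-tableaux of shape `S` is given by the formulas of the paper:
`τ · X = c(X|1) X` and
`σ_i · X = -(q-q⁻¹) c(X|i+1)/(c(X|i) - c(X|i+1)) X
          + (q c(X|i+1) - q⁻¹ c(X|i))/(c(X|i+1) - c(X|i)) X s_i`,
where `X s_i` is `X` with the entries `i` and `i+1` exchanged, interpreted as
`0` if it is not standard. -/
def IsTabRep (m n : ℕ) (q : ℂ) (v : Fin m → ℂ) (S : Set (Fin m × ℕ × ℕ))
    (ρ : CycHecke ℂ m n q q⁻¹ v →ₐ[ℂ] Module.End ℂ (Tab m n S →₀ ℂ)) : Prop :=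
  (∀ (T : Tab m n S) (h0 : 0 < n),
    ρ (tauH ℂ m n q q⁻¹ v) (Finsupp.single T 1) =
      tabContent m n q v T.1 ⟨0, h0⟩ • Finsupp.single T 1) ∧
  (∀ (T : Tab m n S) (i : ℕ) (h : i + 1 < n),
    ρ (sigN ℂ m n q q⁻¹ v i) (Finsupp.single T 1) =
      (-((q - q⁻¹) * tabContent m n q v T.1 ⟨i + 1, h⟩ /
          (tabContent m n q v T.1 ⟨i, by omega⟩ - tabContent m n q v T.1 ⟨i + 1, h⟩))) •
        Finsupp.single T 1 +
      ((q * tabContent m n q v T.1 ⟨i + 1, h⟩ - q⁻¹ * tabContent m n q v T.1 ⟨i, by omega⟩) /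
          (tabContent m n q v T.1 ⟨i + 1, h⟩ - tabContent m n q v T.1 ⟨i, by omega⟩)) •
        (if hstd : IsStdTab m n (T.1 ∘ Equiv.swap ⟨i, by omega⟩ ⟨i + 1, h⟩)
         then Finsupp.single
            (⟨T.1 ∘ Equiv.swap ⟨i, by omega⟩ ⟨i + 1, h⟩, hstd, by
              rw [Set.range_comp, Equiv.range_eq_univ, Set.image_univ]
              exact T.2.2⟩ : Tab m n S) 1
         else 0))

section Proof15

lemma rect_mem {m n : ℕ} {T : Fin n → Fin m × ℕ × ℕ} (hT : IsStdTab m n T) (t : Fin n)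
    {a b : ℕ} (ha : a ≤ (T t).2.1) (hb : b ≤ (T t).2.2) :
    ∃ t' : Fin n, t' ≤ t ∧ T t' = ((T t).1, a, b) := by
  obtain ⟨t1, ht1, hTt1⟩ : ∃ t1 : Fin n, t1 ≤ t ∧ T t1 = ((T t).1, a, (T t).2.2) := by
    rcases lt_or_eq_of_le ha with h | h
    · obtain ⟨t1, h1, h2⟩ := (hT.2 t).2 a h
      exact ⟨t1, le_of_lt h1, h2⟩
    · exact ⟨t, le_refl t, by rw [h]⟩
  rcases lt_or_eq_of_le hb with h | h
  · obtain ⟨t2, h1, h2⟩ := (hT.2 t1).1 b (by rw [hTt1]; exact h)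
    refine ⟨t2, le_of_lt (lt_of_lt_of_le h1 ht1), ?_⟩
    rw [h2, hTt1]
  · exact ⟨t1, ht1, by rw [hTt1, h]⟩

end Proof15

section Proof15b

variable {m n : ℕ} {q : ℂ} {v : Fin m → ℂ} {S : Set (Fin m × ℕ × ℕ)}
  {ρ : CycHecke ℂ m n q q⁻¹ v →ₐ[ℂ] Module.End ℂ (Tab m n S →₀ ℂ)}

/-- The quadratic relation for the image of a generator. -/
lemma sig_quad (hρ : IsTabRep m n q v S ρ) (i : ℕ) (hi : i + 1 < n)
    (x : Tab m n S →₀ ℂ) :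
    ρ (sigN ℂ m n q q⁻¹ v i) (ρ (sigN ℂ m n q q⁻¹ v i) x) =
      (q - q⁻¹) • ρ (sigN ℂ m n q q⁻¹ v i) x + x := by
  have hlt : i < n - 1 := by omega
  have h1 : sigN ℂ m n q q⁻¹ v i = sigH ℂ m n q q⁻¹ v ⟨i, hlt⟩ := dif_pos hlt
  have h2 : sigH ℂ m n q q⁻¹ v ⟨i, hlt⟩ * sigH ℂ m n q q⁻¹ v ⟨i, hlt⟩ =
      (q - q⁻¹) • sigH ℂ m n q q⁻¹ v ⟨i, hlt⟩ + 1 := by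
    unfold sigH
    rw [← map_mul, RingQuot.mkAlgHom_rel ℂ (cycRel.quadratic ⟨i, hlt⟩), map_add, map_one,
      map_smul]
  have h3 := congrArg ρ h2
  rw [map_mul, map_add, map_one, map_smul] at h3
  have h4 := congrFun (congrArg (fun (g : Module.End ℂ (Tab m n S →₀ ℂ)) => (g : _ → _)) h3) x
  simp only [Module.End.mul_apply, LinearMap.add_apply, LinearMap.smul_apply,
    Module.End.one_apply] at h4
  rw [h1]
  exact h4

/-- No two consecutive entries of a standard tableau have equal contents
(given a tableau representation). -/
lemma content_ne (hρ : IsTabRep m n q v S ρ) (Y : Tab m n S) (i : ℕ) (h : i + 1 < n) :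
    tabContent m n q v Y.1 ⟨i, by omega⟩ ≠ tabContent m n q v Y.1 ⟨i + 1, h⟩ := by
  intro heq
  have h3 := hρ.2 Y i h
  have e0 : tabContent m n q v Y.1 ⟨i, by omega⟩ - tabContent m n q v Y.1 ⟨i + 1, h⟩ = 0 :=
    sub_eq_zero.mpr heq
  have e1 : tabContent m n q v Y.1 ⟨i + 1, h⟩ - tabContent m n q v Y.1 ⟨i, by omega⟩ = 0 :=
    sub_eq_zero.mpr heq.symm
  rw [e0, e1, div_zero, div_zero, neg_zero] at h3
  erw [zero_smul, zero_smul, add_zero] at h3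
  have h4 := sig_quad hρ i h (Finsupp.single Y 1)
  rw [h3, map_zero, smul_zero, zero_add] at h4
  exact one_ne_zero ((Finsupp.single_eq_zero).mp h4.symm)

end Proof15b

section Proof15c

variable {m n : ℕ} {q : ℂ} {v : Fin m → ℂ} {S : Set (Fin m × ℕ × ℕ)}
  {ρ : CycHecke ℂ m n q q⁻¹ v →ₐ[ℂ] Module.End ℂ (Tab m n S →₀ ℂ)}

lemma sig_apply_std (hρ : IsTabRep m n q v S ρ) (Y Z : Tab m n S) (i : ℕ) (h : i + 1 < n)
    (hZ : Z.1 = Y.1 ∘ Equiv.swap ⟨i, by omega⟩ ⟨i + 1, h⟩) :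
    ρ (sigN ℂ m n q q⁻¹ v i) (Finsupp.single Y 1) =
      (-((q - q⁻¹) * tabContent m n q v Y.1 ⟨i + 1, h⟩ /
          (tabContent m n q v Y.1 ⟨i, by omega⟩ - tabContent m n q v Y.1 ⟨i + 1, h⟩))) •
        Finsupp.single Y 1 +
      ((q * tabContent m n q v Y.1 ⟨i + 1, h⟩ - q⁻¹ * tabContent m n q v Y.1 ⟨i, by omega⟩) /
          (tabContent m n q v Y.1 ⟨i + 1, h⟩ - tabContent m n q v Y.1 ⟨i, by omega⟩)) •
        Finsupp.single Z 1 := by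
  rw [hρ.2 Y i h]
  congr 1
  have hstd' : IsStdTab m n (Y.1 ∘ Equiv.swap ⟨i, by omega⟩ ⟨i + 1, h⟩) := by
    rw [← hZ]; exact Z.2.1
  rw [dif_pos hstd']
  congr 1
  exact congrArg (fun W : Tab m n S => Finsupp.single W (1 : ℂ)) (Subtype.ext hZ.symm)

lemma sig_apply_nonstd (hρ : IsTabRep m n q v S ρ) (Y : Tab m n S) (i : ℕ) (h : i + 1 < n)
    (hns : ¬ IsStdTab m n (Y.1 ∘ Equiv.swap ⟨i, by omega⟩ ⟨i + 1, h⟩)) :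
    ρ (sigN ℂ m n q q⁻¹ v i) (Finsupp.single Y 1) =
      (-((q - q⁻¹) * tabContent m n q v Y.1 ⟨i + 1, h⟩ /
          (tabContent m n q v Y.1 ⟨i, by omega⟩ - tabContent m n q v Y.1 ⟨i + 1, h⟩))) •
        Finsupp.single Y 1 := by
  rw [hρ.2 Y i h, dif_neg hns]
  erw [smul_zero, add_zero]

end Proof15c

section Proof15d

variable {m n : ℕ} {q : ℂ} {v : Fin m → ℂ} {S : Set (Fin m × ℕ × ℕ)}
  {ρ : CycHecke ℂ m n q q⁻¹ v →ₐ[ℂ] Module.End ℂ (Tab m n S →₀ ℂ)}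

lemma jm_diag (hn : 0 < n) (hq : q ≠ 0) (hρ : IsTabRep m n q v S ρ) :
    ∀ (k : ℕ) (hk : k < n) (Y : Tab m n S),
      ρ (JM ℂ m n q q⁻¹ v k) (Finsupp.single Y 1) =
        tabContent m n q v Y.1 ⟨k, hk⟩ • Finsupp.single Y 1 := by
  intro k
  induction k with
  | zero => intro hk Y; exact hρ.1 Y hn
  | succ k ih =>
    intro hk Y
    have hk' : k < n := by omega
    have hrw : JM ℂ m n q q⁻¹ v (k + 1) =
        sigN ℂ m n q q⁻¹ v k * JM ℂ m n q q⁻¹ v k * sigN ℂ m n q q⁻¹ v k := rfl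
    have hne : tabContent m n q v Y.1 ⟨k, by omega⟩ ≠ tabContent m n q v Y.1 ⟨k + 1, hk⟩ :=
      content_ne hρ Y k hk
    have h12 : tabContent m n q v Y.1 ⟨k, by omega⟩ - tabContent m n q v Y.1 ⟨k + 1, hk⟩ ≠ 0 :=
      sub_ne_zero.mpr hne
    have h21 : tabContent m n q v Y.1 ⟨k + 1, hk⟩ - tabContent m n q v Y.1 ⟨k, by omega⟩ ≠ 0 :=
      sub_ne_zero.mpr hne.symm
    rw [hrw, map_mul, map_mul]
    simp only [Module.End.mul_apply]
    by_cases hstd : IsStdTab m n (Y.1 ∘ Equiv.swap ⟨k, by omega⟩ ⟨k + 1, hk⟩)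
    · set Z : Tab m n S := ⟨Y.1 ∘ Equiv.swap ⟨k, by omega⟩ ⟨k + 1, hk⟩, hstd, by
        rw [Set.range_comp, Equiv.range_eq_univ, Set.image_univ]; exact Y.2.2⟩ with hZdef
      have hZ1 : Z.1 = Y.1 ∘ Equiv.swap ⟨k, by omega⟩ ⟨k + 1, hk⟩ := rfl
      have hcz1 : tabContent m n q v Z.1 ⟨k, by omega⟩ = tabContent m n q v Y.1 ⟨k + 1, hk⟩ := by
        unfold tabContent
        rw [hZ1, Function.comp_apply, Equiv.swap_apply_left]
      have hcz2 : tabContent m n q v Z.1 ⟨k + 1, hk⟩ = tabContent m n q v Y.1 ⟨k, by omega⟩ := by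
        unfold tabContent
        rw [hZ1, Function.comp_apply, Equiv.swap_apply_right]
      have hZswap : Y.1 = Z.1 ∘ Equiv.swap ⟨k, by omega⟩ ⟨k + 1, hk⟩ := by
        rw [hZ1]; funext x
        simp [Function.comp, Equiv.swap_apply_self]
      have hsY := sig_apply_std hρ Y Z k hk hZ1
      have hsZ := sig_apply_std hρ Z Y k hk hZswap
      rw [hcz1, hcz2] at hsZ
      rw [hsY]
      simp only [map_add, map_smul]
      rw [ih hk' Y, ih hk' Z, hcz1]
      simp only [map_smul]
      rw [hsY, hsZ]
      match_scalars
      · field_simp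
        ring
      · field_simp
        ring
    · have hsY := sig_apply_nonstd hρ Y k hk hstd
      rw [hsY]
      simp only [map_smul]
      rw [ih hk' Y]
      simp only [map_smul]
      rw [hsY]
      match_scalars
      have hA : -((q - q⁻¹) * tabContent m n q v Y.1 ⟨k + 1, hk⟩ /
            (tabContent m n q v Y.1 ⟨k, by omega⟩ - tabContent m n q v Y.1 ⟨k + 1, hk⟩)) *
            (tabContent m n q v Y.1 ⟨k, by omega⟩ - tabContent m n q v Y.1 ⟨k + 1, hk⟩) =
          -((q - q⁻¹) * tabContent m n q v Y.1 ⟨k + 1, hk⟩) := by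
        field_simp
      have h4 := sig_quad hρ k hk (Finsupp.single Y 1)
      rw [hsY, map_smul, hsY] at h4
      have h5 := congrArg (fun g : Tab m n S →₀ ℂ => g Y) h4
      simp only [Finsupp.smul_apply, Finsupp.add_apply, Finsupp.single_eq_same,
        smul_eq_mul, mul_one] at h5
      linear_combination tabContent m n q v Y.1 ⟨k + 1, hk⟩ * h5 +
        (-((q - q⁻¹) * tabContent m n q v Y.1 ⟨k + 1, hk⟩ /
          (tabContent m n q v Y.1 ⟨k, by omega⟩ - tabContent m n q v Y.1 ⟨k + 1, hk⟩))) * hA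
end Proof15d

section Proof15e

lemma diag_apply {m n : ℕ} {S : Set (Fin m × ℕ × ℕ)} (g : Module.End ℂ (Tab m n S →₀ ℂ))
    (c : Tab m n S → ℂ) (hg : ∀ T, g (Finsupp.single T 1) = c T • Finsupp.single T 1)
    (z : Tab m n S →₀ ℂ) (X : Tab m n S) : g z X = c X * z X := by
  classical
  induction z using Finsupp.induction_linear with
  | zero => simp
  | add f h hf hh => rw [map_add, Finsupp.add_apply, Finsupp.add_apply, hf, hh]; ring
  | single a b =>
    have hb : (Finsupp.single a b : Tab m n S →₀ ℂ) = b • Finsupp.single a 1 := by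
      rw [Finsupp.smul_single, smul_eq_mul, mul_one]
    rw [hb, map_smul, hg a]
    rcases eq_or_ne a X with rfl | hne
    · simp only [Finsupp.smul_apply, Finsupp.single_eq_same, smul_eq_mul]; ring
    · simp only [Finsupp.smul_apply, Finsupp.single_eq_of_ne hne.symm, smul_eq_mul]; ring

end Proof15e

section Proof15f

lemma two_nodes_contra {m n : ℕ} {q : ℂ} {v : Fin m → ℂ} {W : Set (Fin m × ℕ × ℕ)}
    {ρ : CycHecke ℂ m n q q⁻¹ v →ₐ[ℂ] Module.End ℂ (Tab m n W →₀ ℂ)}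
    (hρ : IsTabRep m n q v W ρ) (hq2 : q ^ (2 : ℕ) = 1)
    {T : Fin n → Fin m × ℕ × ℕ} (hT : IsStdTab m n T) (hrT : Set.range T = W)
    {j : Fin m} {p1 p2 : ℕ × ℕ} (h1 : (j, p1) ∈ W) (h2 : (j, p2) ∈ W) (hne : p1 ≠ p2) :
    False := by
  classical
  set f : Fin n → Lex (Fin m × Lex (ℕ × ℕ)) :=
    fun i => toLex ((T i).1, toLex ((T i).2.1, (T i).2.2)) with hfdef
  have hfinj : Function.Injective f := by
    intro x y hxy
    apply hT.1
    have e1 := congrArg (fun z => (ofLex z).1) hxy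
    have e2 := congrArg (fun z => (ofLex (ofLex z).2).1) hxy
    have e3 := congrArg (fun z => (ofLex (ofLex z).2).2) hxy
    simp only [hfdef] at e1 e2 e3
    exact Prod.ext e1 (Prod.ext e2 e3)
  set φ := Tuple.sort f with hφdef
  set T' := T ∘ φ with hT'def
  have hmono : Monotone (f ∘ φ) := Tuple.monotone_sort f
  have hsm : StrictMono (f ∘ φ) := hmono.strictMono_of_injective (hfinj.comp φ.injective)
  have hT'std : IsStdTab m n T' := by
    refine ⟨hT.1.comp φ.injective, fun i => ⟨?_, ?_⟩⟩
    · intro s' hs'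
      obtain ⟨jj, _, hjj⟩ := (hT.2 (φ i)).1 s' hs'
      refine ⟨φ.symm jj, ?_, ?_⟩
      · have hlt : (f ∘ φ) (φ.symm jj) < (f ∘ φ) i := by
          show f (φ (φ.symm jj)) < f (φ i)
          rw [Equiv.apply_symm_apply]
          show toLex ((T jj).1, toLex ((T jj).2.1, (T jj).2.2)) <
            toLex ((T (φ i)).1, toLex ((T (φ i)).2.1, (T (φ i)).2.2))
          rw [hjj]
          exact Prod.Lex.lt_iff.mpr (Or.inr ⟨rfl,
            Prod.Lex.lt_iff.mpr (Or.inr ⟨rfl, hs'⟩)⟩)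
        exact hsm.lt_iff_lt.mp hlt
      · show T (φ (φ.symm jj)) = _
        rw [Equiv.apply_symm_apply, hjj]; rfl
    · intro r' hr'
      obtain ⟨jj, _, hjj⟩ := (hT.2 (φ i)).2 r' hr'
      refine ⟨φ.symm jj, ?_, ?_⟩
      · have hlt : (f ∘ φ) (φ.symm jj) < (f ∘ φ) i := by
          show f (φ (φ.symm jj)) < f (φ i)
          rw [Equiv.apply_symm_apply]
          show toLex ((T jj).1, toLex ((T jj).2.1, (T jj).2.2)) <
            toLex ((T (φ i)).1, toLex ((T (φ i)).2.1, (T (φ i)).2.2))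
          rw [hjj]
          exact Prod.Lex.lt_iff.mpr (Or.inr ⟨rfl,
            Prod.Lex.lt_iff.mpr (Or.inl hr')⟩)
        exact hsm.lt_iff_lt.mp hlt
      · show T (φ (φ.symm jj)) = _
        rw [Equiv.apply_symm_apply, hjj]; rfl
  have hrange' : Set.range T' = W := by
    rw [hT'def, Set.range_comp, Equiv.range_eq_univ, Set.image_univ, hrT]
  have key : ∀ a b : Fin n, a < b → (T' a).1 = j → (T' b).1 = j → False := by
    intro a b hab ha hb
    have hbn : (b : ℕ) < n := b.isLt
    have hb' : (a : ℕ) + 1 < n := by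
      have : (a : ℕ) < (b : ℕ) := hab
      omega
    set a1 : Fin n := ⟨a.1 + 1, hb'⟩ with ha1def
    have haa1 : a ≤ a1 := by
      rw [Fin.le_def]; simp [ha1def]
    have ha1b : a1 ≤ b := by
      rw [Fin.le_def]
      have : (a : ℕ) < (b : ℕ) := hab
      simp [ha1def]; omega
    have hfst : ∀ x y : Fin n, x ≤ y → (T' x).1 ≤ (T' y).1 := by
      intro x y hxy
      have hle := hmono (show x ≤ y from hxy)
      rcases Prod.Lex.le_iff.mp hle with h | h
      · exact le_of_lt h
      · exact le_of_eq h.1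
    have hmid : (T' a1).1 = j :=
      le_antisymm (hb ▸ hfst a1 b ha1b) (ha ▸ hfst a a1 haa1)
    have hcont : ∀ x : Fin n, (T' x).1 = j → tabContent m n q v T' x = v j := by
      intro x hx
      unfold tabContent
      rw [hx]
      have hz : q ^ (2 * (((T' x).2.2 : ℤ) - ((T' x).2.1 : ℤ))) = 1 := by
        rw [zpow_mul]
        have : (q : ℂ) ^ (2 : ℤ) = 1 := by
          rw [show (2 : ℤ) = ((2 : ℕ) : ℤ) from rfl, zpow_natCast, hq2]
        rw [this, one_zpow]
      rw [hz, mul_one]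
    exact content_ne hρ ⟨T', hT'std, hrange'⟩ a.1 hb'
      (by
        have e1 : tabContent m n q v T' ⟨(a : ℕ), by omega⟩ = v j := by
          rw [show (⟨(a : ℕ), by omega⟩ : Fin n) = a from rfl]; exact hcont a ha
        have e2 : tabContent m n q v T' ⟨(a : ℕ) + 1, hb'⟩ = v j := hcont a1 hmid
        rw [e1, e2])
  rw [← hrange'] at h1 h2
  obtain ⟨u1, hu1⟩ := h1
  obtain ⟨u2, hu2⟩ := h2
  have hu12 : u1 ≠ u2 := by
    intro h
    apply hne
    rw [h, hu2] at hu1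
    exact (Prod.mk.injEq _ _ _ _).mp hu1.symm |>.2
  rcases lt_or_gt_of_ne hu12 with h | h
  · exact key u1 u2 h (by rw [hu1]) (by rw [hu2])
  · exact key u2 u1 h (by rw [hu2]) (by rw [hu1])

end Proof15f

section Proof15g

lemma reconstruct {m n : ℕ} {q : ℂ} (hq : q ≠ 0) {v : Fin m → ℂ} (hv : ∀ k, v k ≠ 0)
    (hss : SSParams m n q v) {S S' : Set (Fin m × ℕ × ℕ)}
    {ρ : CycHecke ℂ m n q q⁻¹ v →ₐ[ℂ] Module.End ℂ (Tab m n S →₀ ℂ)}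
    (hρ : IsTabRep m n q v S ρ)
    {ρ' : CycHecke ℂ m n q q⁻¹ v →ₐ[ℂ] Module.End ℂ (Tab m n S' →₀ ℂ)}
    (hρ' : IsTabRep m n q v S' ρ')
    {T U : Fin n → Fin m × ℕ × ℕ} (hT : IsStdTab m n T) (hU : IsStdTab m n U)
    (hrT : Set.range T = S) (hrU : Set.range U = S')
    (hc : ∀ t : Fin n, tabContent m n q v T t = tabContent m n q v U t) :
    T = U := by
  classical
  have main : ∀ N : ℕ, ∀ t : Fin n, (t : ℕ) < N → T t = U t := by
    intro N
    induction N with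
    | zero => intro t ht; omega
    | succ N ihN =>
      intro t ht
      rcases Nat.lt_or_ge (t : ℕ) N with hlt | hge
      · exact ihN t hlt
      -- core argument
      have hIH : ∀ t' : Fin n, t' < t → T t' = U t' := by
        intro t' ht'
        exact ihN t' (by have := Fin.lt_def.mp ht'; omega)
      rcases hTt : T t with ⟨j, r, s⟩
      rcases hUt : U t with ⟨j', r', s'⟩
      have hct := hc t
      unfold tabContent at hct
      rw [hTt, hUt] at hct
      simp only at hct
      have memT : ∀ p : Fin m × ℕ × ℕ, (∃ t'', T t'' = p) → p ∈ Finset.image T Finset.univ := by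
        rintro p ⟨t'', rfl⟩
        exact Finset.mem_image_of_mem T (Finset.mem_univ t'')
      have himg : (Finset.image T Finset.univ).card ≤ n :=
        le_trans Finset.card_image_le (by simp)
      have transferU : ∀ p : Fin m × ℕ × ℕ, p ≠ (j', r', s') →
          (∃ t'', t'' ≤ t ∧ U t'' = p) → ∃ t'', t'' < t ∧ T t'' = p := by
        rintro p hp ⟨t'', ht1, ht2⟩
        have hne : t'' ≠ t := fun h => hp (by rw [← ht2, h, hUt])
        have hlt : t'' < t := lt_of_le_of_ne ht1 hne
        exact ⟨t'', hlt, by rw [hIH t'' hlt, ht2]⟩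
      have rectT : ∀ a b : ℕ, a ≤ r → b ≤ s → ∃ t'', T t'' = (j, a, b) := by
        intro a b ha hb
        obtain ⟨t'', _, h⟩ := rect_mem hT t (a := a) (b := b)
          (by rw [hTt]; exact ha) (by rw [hTt]; exact hb)
        exact ⟨t'', by rw [h, hTt]⟩
      have rectU : ∀ a b : ℕ, a ≤ r' → b ≤ s' → ∃ t'', t'' ≤ t ∧ U t'' = (j', a, b) := by
        intro a b ha hb
        obtain ⟨t'', h1, h⟩ := rect_mem hU t (a := a) (b := b)
          (by rw [hUt]; exact ha) (by rw [hUt]; exact hb)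
        exact ⟨t'', h1, by rw [h, hUt]⟩
      have rectU' : ∀ a b : ℕ, a ≤ r' → b ≤ s' → (a, b) ≠ (r', s') →
          ∃ t'', t'' < t ∧ T t'' = (j', a, b) := by
        intro a b ha hb hab
        exact transferU _ (fun h => hab ((Prod.mk.injEq _ _ _ _).mp h).2) (rectU a b ha hb)
      rcases eq_or_ne j j' with hjj | hjj
      · -- same diagram
        subst hjj
        have hvv : q ^ (2 * ((s : ℤ) - r)) = q ^ (2 * ((s' : ℤ) - r')) :=
          mul_left_cancel₀ (hv j) hct
        have rectTle : ∀ a b : ℕ, a ≤ r → b ≤ s → ∃ t'', t'' ≤ t ∧ T t'' = (j, a, b) := by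
          intro a b ha hb
          obtain ⟨t'', h1, h⟩ := rect_mem hT t (a := a) (b := b)
            (by rw [hTt]; exact ha) (by rw [hTt]; exact hb)
          exact ⟨t'', h1, by rw [h, hTt]⟩
        rcases eq_or_ne ((s : ℤ) - r) ((s' : ℤ) - r') with hd | hd
        · rcases lt_trichotomy r r' with hrr | hrr | hrr
          · exfalso
            have hss' : s < s' := by omega
            obtain ⟨t1, hlt1, hT1⟩ := rectU' r s' (le_of_lt hrr) le_rfl
              (fun h => by have := ((Prod.mk.injEq _ _ _ _).mp h).1; omega)
            obtain ⟨t2, hlt2, hT2⟩ := (hT.2 t1).1 s (by rw [hT1]; exact hss')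
            rw [hT1] at hT2
            simp only at hT2
            have ht2t : t2 = t := hT.1 (by rw [hT2, hTt])
            have hfin : t2 < t := lt_trans hlt2 hlt1
            rw [ht2t] at hfin
            exact lt_irrefl t hfin
          · have hsseq : s = s' := by omega
            rw [hrr, hsseq]
          · exfalso
            have hss' : s' < s := by omega
            obtain ⟨t1, ht1le, hT1⟩ := rectTle r' s (le_of_lt hrr) le_rfl
            have ht1lt : t1 < t := lt_of_le_of_ne ht1le (fun h => by
              rw [h, hTt] at hT1
              have := ((Prod.mk.injEq _ _ _ _).mp hT1).2
              have := ((Prod.mk.injEq _ _ _ _).mp this).1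
              omega)
            have hU1 : U t1 = (j, r', s) := by rw [← hIH t1 ht1lt]; exact hT1
            obtain ⟨t2, hlt2, hU2⟩ := (hU.2 t1).1 s' (by rw [hU1]; exact hss')
            rw [hU1] at hU2
            simp only at hU2
            have ht2t : t2 = t := hU.1 (by rw [hU2, hUt])
            have hfin : t2 < t := lt_trans hlt2 ht1lt
            rw [ht2t] at hfin
            exact lt_irrefl t hfin
        · exfalso
          have he : q ^ (2 * (((s : ℤ) - r) - ((s' : ℤ) - r'))) = 1 := by
            rw [mul_sub, zpow_sub₀ hq, hvv, div_self (zpow_ne_zero _ hq)]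
          have he0 : ((s : ℤ) - r) - ((s' : ℤ) - r') ≠ 0 := sub_ne_zero.mpr hd
          -- first counting bound : s + r' ≤ n
          have hb1 : s + r' ≤ n := by
            set Row : Finset (Fin m × ℕ × ℕ) :=
              (Finset.range (s + 1)).image (fun b => (j, r, b)) with hRowdef
            set Col : Finset (Fin m × ℕ × ℕ) :=
              (Finset.range r').image (fun a => (j, a, s')) with hColdef
            have hRow : Row.card = s + 1 := by
              rw [hRowdef, Finset.card_image_of_injective _
                (fun x y h => by simpa [Prod.mk.injEq] using h)]
              simp
            have hCol : Col.card = r' := by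
              rw [hColdef, Finset.card_image_of_injective _
                (fun x y h => by simpa [Prod.mk.injEq] using h)]
              simp
            have hsubU : Row ∪ Col ⊆ Finset.image T Finset.univ := by
              intro x hx
              rcases Finset.mem_union.mp hx with hx | hx
              · rw [hRowdef, Finset.mem_image] at hx
                obtain ⟨b, hb, rfl⟩ := hx
                simp only [Finset.mem_range] at hb
                exact memT _ (rectT r b le_rfl (by omega))
              · rw [hColdef, Finset.mem_image] at hx
                obtain ⟨a, ha, rfl⟩ := hx
                simp only [Finset.mem_range] at ha
                obtain ⟨t'', _, h⟩ := rectU' a s' (by omega) le_rfl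
                  (fun h => by have := ((Prod.mk.injEq _ _ _ _).mp h).1; omega)
                exact memT _ ⟨t'', h⟩
            have hinter : Row ∩ Col ⊆ {((j, r, s') : Fin m × ℕ × ℕ)} := by
              intro x hx
              obtain ⟨hx1, hx2⟩ := Finset.mem_inter.mp hx
              rw [hRowdef, Finset.mem_image] at hx1
              rw [hColdef, Finset.mem_image] at hx2
              obtain ⟨b, _, rfl⟩ := hx1
              obtain ⟨a, _, hax⟩ := hx2
              have h1 := ((Prod.mk.injEq _ _ _ _).mp hax).2
              have h2 := ((Prod.mk.injEq _ _ _ _).mp h1).1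
              have h3 := ((Prod.mk.injEq _ _ _ _).mp h1).2
              rw [Finset.mem_singleton, h3]
            have hc1 := Finset.card_union_add_card_inter Row Col
            have hc2 : (Row ∪ Col).card ≤ n :=
              le_trans (Finset.card_le_card hsubU) himg
            have hc3 : (Row ∩ Col).card ≤ 1 :=
              le_trans (Finset.card_le_card hinter) (by simp)
            omega
          -- second counting bound : r + s' ≤ n
          have hb2 : r + s' ≤ n := by
            set Row : Finset (Fin m × ℕ × ℕ) :=
              (Finset.range s').image (fun b => (j, r', b)) with hRowdef
            set Col : Finset (Fin m × ℕ × ℕ) :=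
              (Finset.range (r + 1)).image (fun a => (j, a, s)) with hColdef
            have hRow : Row.card = s' := by
              rw [hRowdef, Finset.card_image_of_injective _
                (fun x y h => by simpa [Prod.mk.injEq] using h)]
              simp
            have hCol : Col.card = r + 1 := by
              rw [hColdef, Finset.card_image_of_injective _
                (fun x y h => by simpa [Prod.mk.injEq] using h)]
              simp
            have hsubU : Row ∪ Col ⊆ Finset.image T Finset.univ := by
              intro x hx
              rcases Finset.mem_union.mp hx with hx | hx
              · rw [hRowdef, Finset.mem_image] at hx
                obtain ⟨b, hb, rfl⟩ := hx
                simp only [Finset.mem_range] at hb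
                obtain ⟨t'', _, h⟩ := rectU' r' b le_rfl (by omega)
                  (fun h => by have := ((Prod.mk.injEq _ _ _ _).mp h).2; omega)
                exact memT _ ⟨t'', h⟩
              · rw [hColdef, Finset.mem_image] at hx
                obtain ⟨a, ha, rfl⟩ := hx
                simp only [Finset.mem_range] at ha
                exact memT _ (rectT a s (by omega) le_rfl)
            have hinter : Row ∩ Col ⊆ {((j, r', s) : Fin m × ℕ × ℕ)} := by
              intro x hx
              obtain ⟨hx1, hx2⟩ := Finset.mem_inter.mp hx
              rw [hRowdef, Finset.mem_image] at hx1
              rw [hColdef, Finset.mem_image] at hx2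
              obtain ⟨b, _, rfl⟩ := hx1
              obtain ⟨a, _, hax⟩ := hx2
              have h1 := ((Prod.mk.injEq _ _ _ _).mp hax).2
              have h2 := ((Prod.mk.injEq _ _ _ _).mp h1).1
              have h3 := ((Prod.mk.injEq _ _ _ _).mp h1).2
              rw [Finset.mem_singleton, ← h3]
            have hc1 := Finset.card_union_add_card_inter Row Col
            have hc2 : (Row ∪ Col).card ≤ n :=
              le_trans (Finset.card_le_card hsubU) himg
            have hc3 : (Row ∩ Col).card ≤ 1 :=
              le_trans (Finset.card_le_card hinter) (by simp)
            omega
          set e : ℤ := ((s : ℤ) - r) - ((s' : ℤ) - r') with hedef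
          have hEn : e.natAbs ≤ n := by
            rw [hedef]
            omega
          have hE0 : e.natAbs ≠ 0 := Int.natAbs_ne_zero.mpr he0
          have h2z : q ^ (2 : ℤ) = q ^ (2 : ℕ) := rfl
          have h2' : ((q ^ 2 : ℂ)) ^ e = 1 := by
            rw [← h2z, ← zpow_mul]
            exact he
          have hw : (q ^ 2) ^ e.natAbs = (1 : ℂ) := by
            rcases Int.natAbs_eq e with hcase | hcase
            · rw [← zpow_natCast (q ^ 2) e.natAbs, ← hcase, h2']
            · rw [← zpow_natCast (q ^ 2) e.natAbs]
              have : ((e.natAbs : ℤ)) = -e := by omega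
              rw [this, zpow_neg, h2', inv_one]
          have hfin : IsOfFinOrder ((q : ℂ) ^ 2) :=
            isOfFinOrder_iff_pow_eq_one.mpr ⟨e.natAbs, by omega, hw⟩
          have ht0pos : 0 < orderOf ((q : ℂ) ^ 2) := hfin.orderOf_pos
          have ht0le : orderOf ((q : ℂ) ^ 2) ≤ e.natAbs :=
            orderOf_le_of_pow_eq_one (by omega) hw
          rcases eq_or_lt_of_le (Nat.succ_le_of_lt ht0pos) with h1 | h2
          · -- q² = 1
            have hq2 : (q : ℂ) ^ 2 = 1 := orderOf_eq_one_iff.mp h1.symm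
            by_cases hrs0 : r = 0 ∧ s = 0
            · have hd'0 : ¬(r' = 0 ∧ s' = 0) := by
                rintro ⟨rfl, rfl⟩
                apply hd
                omega
              obtain ⟨t1, _, hU1⟩ := rectU 0 0 (by omega) (by omega)
              refine two_nodes_contra hρ' hq2 hU hrU (j := j) (p1 := (r', s'))
                (p2 := (0, 0)) ?_ ?_ ?_
              · rw [← hrU]; exact ⟨t, hUt⟩
              · rw [← hrU]; exact ⟨t1, hU1⟩
              · intro h
                have h1' := ((Prod.mk.injEq _ _ _ _).mp h).1
                have h2' := ((Prod.mk.injEq _ _ _ _).mp h).2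
                exact hd'0 ⟨h1', h2'⟩
            · obtain ⟨t1, hT1⟩ := rectT 0 0 (by omega) (by omega)
              refine two_nodes_contra hρ hq2 hT hrT (j := j) (p1 := (r, s))
                (p2 := (0, 0)) ?_ ?_ ?_
              · rw [← hrT]; exact ⟨t, hTt⟩
              · rw [← hrT]; exact ⟨t1, hT1⟩
              · intro h
                have h1' := ((Prod.mk.injEq _ _ _ _).mp h).1
                have h2' := ((Prod.mk.injEq _ _ _ _).mp h).2
                exact hrs0 ⟨h1', h2'⟩
          · -- 2 ≤ orderOf (q²)
            have hw1 : (q : ℂ) ^ 2 ≠ 1 := by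
              intro h
              rw [h, orderOf_one] at h2
              omega
            have hsum : ∑ k ∈ Finset.range (orderOf ((q : ℂ) ^ 2)), ((q : ℂ) ^ 2) ^ k = 0 := by
              have hg := geom_sum_eq hw1 (orderOf ((q : ℂ) ^ 2))
              rw [hg, pow_orderOf_eq_one, sub_self, zero_div]
            have hnpos : 0 < n := t.pos
            refine hss.1 (orderOf ((q : ℂ) ^ 2) - 1) (by omega) (by omega) ?_
            rw [show orderOf ((q : ℂ) ^ 2) - 1 + 1 = orderOf ((q : ℂ) ^ 2) by omega]
            calc ∑ k ∈ Finset.range (orderOf ((q : ℂ) ^ 2)), q ^ (2 * k)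
                = ∑ k ∈ Finset.range (orderOf ((q : ℂ) ^ 2)), ((q : ℂ) ^ 2) ^ k :=
                  Finset.sum_congr rfl (fun k _ => pow_mul q 2 k)
              _ = 0 := hsum

      · -- different diagrams
        set A : Finset (Fin m × ℕ × ℕ) :=
          ((Finset.range (r + 1)) ×ˢ (Finset.range (s + 1))).image
            (fun p : ℕ × ℕ => (j, p.1, p.2)) with hA
        set B : Finset (Fin m × ℕ × ℕ) :=
          (((Finset.range (r' + 1)) ×ˢ (Finset.range (s' + 1))).image
            (fun p : ℕ × ℕ => (j', p.1, p.2))).erase (j', r', s') with hB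
        have hAcard : A.card = (r + 1) * (s + 1) := by
          rw [hA, Finset.card_image_of_injective _
            (fun p p' h => by
              simpa [Prod.mk.injEq, Prod.ext_iff] using h)]
          simp [Finset.card_product]
        have hBcard : B.card = (r' + 1) * (s' + 1) - 1 := by
          have hmem : ((j', r', s') : Fin m × ℕ × ℕ) ∈
              ((Finset.range (r' + 1)) ×ˢ (Finset.range (s' + 1))).image
                (fun p : ℕ × ℕ => (j', p.1, p.2)) :=
            Finset.mem_image.mpr ⟨(r', s'), by simp, rfl⟩
          rw [hB, Finset.card_erase_of_mem hmem, Finset.card_image_of_injective _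
            (fun p p' h => by simpa [Prod.mk.injEq, Prod.ext_iff] using h)]
          simp [Finset.card_product]
        have hdisj : Disjoint A B := by
          rw [Finset.disjoint_left]
          intro x hx hx'
          rw [hA, Finset.mem_image] at hx
          obtain ⟨p, _, rfl⟩ := hx
          have := Finset.mem_of_mem_erase hx'
          rw [Finset.mem_image] at this
          obtain ⟨p', _, hp'⟩ := this
          exact hjj (congrArg Prod.fst hp').symm
        have hsub : A ∪ B ⊆ Finset.image T Finset.univ := by
          intro x hx
          rcases Finset.mem_union.mp hx with hx | hx
          · rw [hA, Finset.mem_image] at hx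
            obtain ⟨p, hp, rfl⟩ := hx
            simp only [Finset.mem_product, Finset.mem_range] at hp
            exact memT _ (rectT p.1 p.2 (by omega) (by omega))
          · have hxe := Finset.ne_of_mem_erase hx
            have hx' := Finset.mem_of_mem_erase hx
            rw [Finset.mem_image] at hx'
            obtain ⟨p, hp, rfl⟩ := hx'
            simp only [Finset.mem_product, Finset.mem_range] at hp
            obtain ⟨t'', _, h⟩ := rectU' p.1 p.2 (by omega) (by omega)
              (by intro hcon; exact hxe (by rw [hcon]))
            exact memT _ ⟨t'', h⟩
        have hcards : (r + 1) * (s + 1) + ((r' + 1) * (s' + 1) - 1) ≤ n := by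
          rw [← hAcard, ← hBcard, ← Finset.card_union_of_disjoint hdisj]
          exact le_trans (Finset.card_le_card hsub) himg
        have e1 : s + 1 ≤ (r + 1) * (s + 1) := Nat.le_mul_of_pos_left _ (by omega)
        have e2 : r' + 1 ≤ (r' + 1) * (s' + 1) := Nat.le_mul_of_pos_right _ (by omega)
        have e3 : r + 1 ≤ (r + 1) * (s + 1) := Nat.le_mul_of_pos_right _ (by omega)
        have e4 : s' + 1 ≤ (r' + 1) * (s' + 1) := Nat.le_mul_of_pos_left _ (by omega)
        set P := (r + 1) * (s + 1) with hP
        set Q := (r' + 1) * (s' + 1) with hQ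
        have hb1 : s + r' + 1 ≤ n := by omega
        have hb2 : r + s' + 1 ≤ n := by omega
        set i : ℤ := ((s : ℤ) - r) - ((s' : ℤ) - r') with hi
        have hil : -(n : ℤ) < i := by omega
        have hiu : i < (n : ℤ) := by omega
        refine absurd ?_ (hss.2 j j' hjj i hil hiu)
        have hz' : q ^ (2 * ((s' : ℤ) - r')) ≠ 0 := zpow_ne_zero _ hq
        calc q ^ (2 * i) * v j
            = (v j * q ^ (2 * ((s : ℤ) - r))) * (q ^ (2 * ((s' : ℤ) - r')))⁻¹ := by
              rw [hi, mul_sub, zpow_sub₀ hq]; ring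
          _ = (v j' * q ^ (2 * ((s' : ℤ) - r'))) * (q ^ (2 * ((s' : ℤ) - r')))⁻¹ := by
              rw [hct]
          _ = v j' := by field_simp
  funext t
  exact main n t t.isLt

end Proof15g
/-- If `λ ≠ μ` are distinct `m`-partitions of length `n`
(encoded by their sets of nodes `S ≠ S'`), then the representations `V_λ` and
`V_μ` of `H(m,1,n)` are not isomorphic as `H(m,1,n)`-modules: there is no
linear equivalence intertwining the two actions. -/
theorem tab_rep_not_isomorphic (m n : ℕ) (hn : 0 < n)
    (q : ℂ) (hq : q ≠ 0) (v : Fin m → ℂ) (hv : ∀ k, v k ≠ 0) (hss : SSParams m n q v)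
    (S S' : Set (Fin m × ℕ × ℕ)) (hSS' : S ≠ S')
    (hS : ∃ T, IsStdTab m n T ∧ Set.range T = S)
    (hS' : ∃ T, IsStdTab m n T ∧ Set.range T = S')
    (ρ : CycHecke ℂ m n q q⁻¹ v →ₐ[ℂ] Module.End ℂ (Tab m n S →₀ ℂ))
    (hρ : IsTabRep m n q v S ρ)
    (ρ' : CycHecke ℂ m n q q⁻¹ v →ₐ[ℂ] Module.End ℂ (Tab m n S' →₀ ℂ))
    (hρ' : IsTabRep m n q v S' ρ') :
    ¬ ∃ f : (Tab m n S →₀ ℂ) ≃ₗ[ℂ] (Tab m n S' →₀ ℂ),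
        ∀ (a : CycHecke ℂ m n q q⁻¹ v) (x : Tab m n S →₀ ℂ),
          f (ρ a x) = ρ' a (f x) := by
  rintro ⟨f, hf⟩
  obtain ⟨T0, hT0, hrT0⟩ := hS
  set X0 : Tab m n S := ⟨T0, hT0, hrT0⟩ with hX0def
  have hy0 : f (Finsupp.single X0 1) ≠ 0 := by
    intro h
    rw [LinearEquiv.map_eq_zero_iff] at h
    exact one_ne_zero (Finsupp.single_eq_zero.mp h)
  obtain ⟨X', hX'⟩ := Finsupp.support_nonempty_iff.mpr hy0
  have hyX' : f (Finsupp.single X0 1) X' ≠ 0 := Finsupp.mem_support_iff.mp hX'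
  have hcontents : ∀ (k : ℕ) (hk : k < n),
      tabContent m n q v X'.1 ⟨k, hk⟩ = tabContent m n q v X0.1 ⟨k, hk⟩ := by
    intro k hk
    have h1 : ρ' (JM ℂ m n q q⁻¹ v k) (f (Finsupp.single X0 1)) =
        tabContent m n q v X0.1 ⟨k, hk⟩ • f (Finsupp.single X0 1) := by
      rw [← hf, jm_diag hn hq hρ k hk X0, map_smul]
    have h2 := congrArg (fun z : Tab m n S' →₀ ℂ => z X') h1
    simp only [Finsupp.smul_apply, smul_eq_mul] at h2
    have h3 : ρ' (JM ℂ m n q q⁻¹ v k) (f (Finsupp.single X0 1)) X' =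
        tabContent m n q v X'.1 ⟨k, hk⟩ * (f (Finsupp.single X0 1)) X' :=
      diag_apply _ (fun Z => tabContent m n q v Z.1 ⟨k, hk⟩)
        (fun Z => jm_diag hn hq hρ' k hk Z) _ X'
    rw [h3] at h2
    exact mul_right_cancel₀ hyX' h2
  have hTU : T0 = X'.1 :=
    reconstruct hq hv hss hρ hρ' hT0 X'.2.1 hrT0 X'.2.2
      (fun t => (hcontents t.1 t.isLt).symm)
  apply hSS'
  rw [← hrT0, hTU, X'.2.2]
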